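/- If M = M_w for a word w ∈ W(n,r), then λ_M : S_n → W(n,r) is order-reversing with respect to the strong Bruhat order on S_n: if σ ≤ τ in the Bruhat order, then λ_M(σ) ≥ λ_M(τ) in W(n,r). -/

import Mathlib

open Matroid Set

/-- The rank of a set `X` in a matroid `M`: the largest cardinality of an independent
subset of `X`. -/
noncomputable def matRk {α : Type*} (M : Matroid α) (X : Set α) : ℕ :=
  sSup {k : ℕ | ∃ I : Set α, I ⊆ X ∧ M.Indep I ∧ I.ncard = k}

/-- The set of positions of the ones of a 0-1 word of length `n`. -/
def ones {n : ℕ} (v : Fin n → Bool) : Finset (Fin n) :=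
  Finset.univ.filter (fun i => v i = true)

/-- The order on `W(n,r)`: `v ≤ w` iff `π_k(v) ≤ π_k(w)` for all `k`, where `π_k`
is the position of the `k`-th one. -/
def wordLE {n : ℕ} (v w : Fin n → Bool) : Prop :=
  (ones v).card = (ones w).card ∧
  ∀ (k : ℕ) (hv : k < (ones v).card) (hw : k < (ones w).card),
    (ones v).orderEmbOfFin rfl ⟨k, hv⟩ ≤ (ones w).orderEmbOfFin rfl ⟨k, hw⟩

/-- The flag on `Fin n` determined by a word `w` with `r` ones: `T_r` is everything,
and `T_{k-1} = { s : s < e_{π_k(w)} }` for `1 ≤ k ≤ r`. -/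
def flagOfWord {n : ℕ} (w : Fin n → Bool) (i : ℕ) : Set (Fin n) :=
  if h : i < (ones w).card
    then {s : Fin n | s < (ones w).orderEmbOfFin rfl ⟨i, h⟩} else Set.univ

/-- `λ_M(σ) = w_{M(S_σ)}`: the word of a matroid `M` on `Fin n` relative to the
reordering `σ(e_1) < ⋯ < σ(e_n)` of the ground set. -/
noncomputable def lam {n : ℕ} (M : Matroid (Fin n)) (σ : Equiv.Perm (Fin n)) :
    Fin n → Bool :=
  fun i => decide
    (matRk M (⇑σ '' {j : Fin n | j < i}) < matRk M (⇑σ '' {j : Fin n | j ≤ i}))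

/-- The number of inversions (the Coxeter length) of a permutation of `Fin n`. -/
def inversions {n : ℕ} (σ : Equiv.Perm (Fin n)) : ℕ :=
  (Finset.univ.filter
    (fun p : Fin n × Fin n => p.1 < p.2 ∧ σ p.2 < σ p.1)).card

/-- The strong Bruhat order on the symmetric group `S_n`: the partial order generated
by `σ < σ·t` for transpositions `t` with `ℓ(σ·t) > ℓ(σ)`, where `ℓ` is the number of
inversions. -/
def bruhatLE {n : ℕ} (σ τ : Equiv.Perm (Fin n)) : Prop :=
  Relation.ReflTransGen
    (fun a b => inversions a < inversions b ∧
      ∃ i j : Fin n, i ≠ j ∧ b = a * Equiv.swap i j) σ τ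


section AuxProof

/-- Flags are downward closed. -/
lemma flag_lower {n : ℕ} (w : Fin n → Bool) (i : ℕ) {s t : Fin n} (hst : s ≤ t)
    (ht : t ∈ flagOfWord w i) : s ∈ flagOfWord w i := by
  by_cases hi : i < (ones w).card
  · simp only [flagOfWord, dif_pos hi, Set.mem_setOf_eq] at ht ⊢
    exact lt_of_le_of_lt hst ht
  · simp [flagOfWord, dif_neg hi]

variable {n r : ℕ} {w : Fin n → Bool} {M : Matroid (Fin n)}

lemma indep_empty (hInd : ∀ I : Set (Fin n),
    M.Indep I ↔ ∀ i ≤ r, (I ∩ flagOfWord w i).ncard ≤ i) : M.Indep ∅ :=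
  (hInd ∅).mpr (fun i _ => by simp)

lemma indep_mono (hInd : ∀ I : Set (Fin n),
    M.Indep I ↔ ∀ i ≤ r, (I ∩ flagOfWord w i).ncard ≤ i)
    {I J : Set (Fin n)} (hIJ : I ⊆ J) (hJ : M.Indep J) : M.Indep I := by
  rw [hInd] at hJ ⊢
  intro i hi
  exact le_trans (Set.ncard_le_ncard (Set.inter_subset_inter_left _ hIJ)
    (Set.toFinite _)) (hJ i hi)

lemma indep_ncard_le (hwr : (ones w).card = r) (hInd : ∀ I : Set (Fin n),
    M.Indep I ↔ ∀ i ≤ r, (I ∩ flagOfWord w i).ncard ≤ i)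
    {I : Set (Fin n)} (hI : M.Indep I) : I.ncard ≤ r := by
  have h := (hInd I).mp hI r le_rfl
  have hu : flagOfWord w r = Set.univ := by
    simp [flagOfWord, hwr]
  rwa [hu, Set.inter_univ] at h

lemma matRk_bdd (hwr : (ones w).card = r) (hInd : ∀ I : Set (Fin n),
    M.Indep I ↔ ∀ i ≤ r, (I ∩ flagOfWord w i).ncard ≤ i) (X : Set (Fin n)) :
    BddAbove {k : ℕ | ∃ I : Set (Fin n), I ⊆ X ∧ M.Indep I ∧ I.ncard = k} := by
  refine ⟨r, fun k hk => ?_⟩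
  obtain ⟨I, _, hI, rfl⟩ := hk
  exact indep_ncard_le hwr hInd hI

lemma matRk_spec (hwr : (ones w).card = r) (hInd : ∀ I : Set (Fin n),
    M.Indep I ↔ ∀ i ≤ r, (I ∩ flagOfWord w i).ncard ≤ i) (X : Set (Fin n)) :
    ∃ I : Set (Fin n), I ⊆ X ∧ M.Indep I ∧ I.ncard = matRk M X := by
  have hne : {k : ℕ | ∃ I : Set (Fin n), I ⊆ X ∧ M.Indep I ∧ I.ncard = k}.Nonempty :=
    ⟨0, ∅, Set.empty_subset X, indep_empty hInd, by simp⟩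
  exact Nat.sSup_mem hne (matRk_bdd hwr hInd X)

lemma le_matRk (hwr : (ones w).card = r) (hInd : ∀ I : Set (Fin n),
    M.Indep I ↔ ∀ i ≤ r, (I ∩ flagOfWord w i).ncard ≤ i)
    {I X : Set (Fin n)} (hIX : I ⊆ X) (hI : M.Indep I) : I.ncard ≤ matRk M X :=
  le_csSup (matRk_bdd hwr hInd X) ⟨I, hIX, hI, rfl⟩

lemma matRk_mono (hwr : (ones w).card = r) (hInd : ∀ I : Set (Fin n),
    M.Indep I ↔ ∀ i ≤ r, (I ∩ flagOfWord w i).ncard ≤ i)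
    {X Y : Set (Fin n)} (hXY : X ⊆ Y) : matRk M X ≤ matRk M Y := by
  obtain ⟨I, hIX, hI, hc⟩ := matRk_spec hwr hInd X
  rw [← hc]
  exact le_matRk hwr hInd (hIX.trans hXY) hI

lemma matRk_empty (hwr : (ones w).card = r) (hInd : ∀ I : Set (Fin n),
    M.Indep I ↔ ∀ i ≤ r, (I ∩ flagOfWord w i).ncard ≤ i) :
    matRk M (∅ : Set (Fin n)) = 0 := by
  obtain ⟨I, hIX, _, hc⟩ := matRk_spec hwr hInd ∅
  rw [Set.subset_empty_iff] at hIX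
  rw [← hc, hIX, Set.ncard_empty]

lemma matRk_insert_le (hwr : (ones w).card = r) (hInd : ∀ I : Set (Fin n),
    M.Indep I ↔ ∀ i ≤ r, (I ∩ flagOfWord w i).ncard ≤ i)
    (e : Fin n) (X : Set (Fin n)) : matRk M (insert e X) ≤ matRk M X + 1 := by
  obtain ⟨I, hIX, hI, hc⟩ := matRk_spec hwr hInd (insert e X)
  rw [← hc]
  have hsub : I \ {e} ⊆ X := by
    rintro z ⟨hzI, hze⟩
    rcases hIX hzI with rfl | h
    · exact absurd rfl hze
    · exact h
  have h1 : (I \ {e}).ncard ≤ matRk M X :=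
    le_matRk hwr hInd hsub (indep_mono hInd Set.diff_subset hI)
  by_cases he : e ∈ I
  · have := Set.ncard_diff_singleton_add_one he (Set.toFinite _)
    omega
  · rw [Set.diff_singleton_eq_self he] at h1
    omega

lemma matRk_exchange (hwr : (ones w).card = r) (hInd : ∀ I : Set (Fin n),
    M.Indep I ↔ ∀ i ≤ r, (I ∩ flagOfWord w i).ncard ≤ i)
    {X : Set (Fin n)} {x y : Fin n} (hxy : x < y)
    (hy : y ∉ X) : matRk M X ≤ matRk M (insert y (X \ {x})) := by
  obtain ⟨I, hIX, hI, hcard⟩ := matRk_spec hwr hInd X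
  rw [← hcard]
  by_cases hxI : x ∈ I
  · have hyI : y ∉ I := fun h => hy (hIX h)
    have hsub : insert y (I \ {x}) ⊆ insert y (X \ {x}) := by
      rintro z (rfl | ⟨hzI, hzx⟩)
      · exact Set.mem_insert _ _
      · exact Set.mem_insert_of_mem _ ⟨hIX hzI, hzx⟩
    have hcard' : (insert y (I \ {x})).ncard = I.ncard := Set.ncard_exchange hyI hxI
    have hindep : M.Indep (insert y (I \ {x})) := by
      rw [hInd]
      intro i hi
      have hle : ((insert y (I \ {x})) ∩ flagOfWord w i).ncard
          ≤ (I ∩ flagOfWord w i).ncard := by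
        by_cases hyD : y ∈ flagOfWord w i
        · have hxD : x ∈ flagOfWord w i := flag_lower w i hxy.le hyD
          have hset : (insert y (I \ {x})) ∩ flagOfWord w i
              = insert y ((I ∩ flagOfWord w i) \ {x}) := by
            ext z
            simp only [Set.mem_inter_iff, Set.mem_insert_iff, Set.mem_diff,
              Set.mem_singleton_iff]
            constructor
            · rintro ⟨rfl | ⟨h1, h2⟩, hD⟩
              · exact Or.inl rfl
              · exact Or.inr ⟨⟨h1, hD⟩, h2⟩
            · rintro (rfl | ⟨⟨h1, hD⟩, h2⟩)
              · exact ⟨Or.inl rfl, hyD⟩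
              · exact ⟨Or.inr ⟨h1, h2⟩, hD⟩
          rw [hset, Set.ncard_exchange (fun hmem => hyI (Set.mem_of_mem_inter_left hmem))
            (Set.mem_inter hxI hxD)]
        · have hsub2 : (insert y (I \ {x})) ∩ flagOfWord w i ⊆ I ∩ flagOfWord w i := by
            rintro z ⟨(rfl | ⟨h1, _⟩), hD⟩
            · exact absurd hD hyD
            · exact ⟨h1, hD⟩
          exact Set.ncard_le_ncard hsub2 (Set.toFinite _)
      exact hle.trans ((hInd I).mp hI i hi)
    calc I.ncard = (insert y (I \ {x})).ncard := hcard'.symm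
      _ ≤ matRk M (insert y (X \ {x})) := le_matRk hwr hInd hsub hindep
  · have hsub : I ⊆ insert y (X \ {x}) :=
      fun z hz => Set.mem_insert_of_mem _ ⟨hIX hz, fun h => hxI (h ▸ hz)⟩
    exact le_matRk hwr hInd hsub hI

/-- The cumulative rank function of `lam M σ`. -/
noncomputable def rkF (M : Matroid (Fin n)) (σ : Equiv.Perm (Fin n)) (k : ℕ) : ℕ :=
  matRk M (⇑σ '' {j : Fin n | (j : ℕ) < k})

lemma rkF_zero (hwr : (ones w).card = r) (hInd : ∀ I : Set (Fin n),
    M.Indep I ↔ ∀ i ≤ r, (I ∩ flagOfWord w i).ncard ≤ i)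
    (σ : Equiv.Perm (Fin n)) : rkF M σ 0 = 0 := by
  have h0 : {j : Fin n | (j : ℕ) < 0} = (∅ : Set (Fin n)) := by ext j; simp
  unfold rkF
  rw [h0, Set.image_empty, matRk_empty hwr hInd]

lemma rkF_mono_step (hwr : (ones w).card = r) (hInd : ∀ I : Set (Fin n),
    M.Indep I ↔ ∀ i ≤ r, (I ∩ flagOfWord w i).ncard ≤ i)
    (σ : Equiv.Perm (Fin n)) (k : ℕ) : rkF M σ k ≤ rkF M σ (k + 1) :=
  matRk_mono hwr hInd (Set.image_mono (fun j hj => Nat.lt_succ_of_lt hj))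

lemma rkF_step_le (hwr : (ones w).card = r) (hInd : ∀ I : Set (Fin n),
    M.Indep I ↔ ∀ i ≤ r, (I ∩ flagOfWord w i).ncard ≤ i)
    (σ : Equiv.Perm (Fin n)) (k : ℕ) : rkF M σ (k + 1) ≤ rkF M σ k + 1 := by
  by_cases hk : k < n
  · have hset : {j : Fin n | (j : ℕ) < k + 1}
        = insert (⟨k, hk⟩ : Fin n) {j : Fin n | (j : ℕ) < k} := by
      ext j
      simp only [Set.mem_setOf_eq, Set.mem_insert_iff, Fin.ext_iff]
      omega
    unfold rkF
    rw [hset, Set.image_insert_eq]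
    exact matRk_insert_le hwr hInd _ _
  · have hset : {j : Fin n | (j : ℕ) < k + 1} = {j : Fin n | (j : ℕ) < k} := by
      ext j
      have := j.isLt
      simp only [Set.mem_setOf_eq]
      omega
    unfold rkF
    rw [hset]
    omega

lemma lam_eq_rkF (σ : Equiv.Perm (Fin n)) (i : Fin n) :
    lam M σ i = decide (rkF M σ (i : ℕ) < rkF M σ ((i : ℕ) + 1)) := by
  have h1 : {j : Fin n | j < i} = {j : Fin n | (j : ℕ) < (i : ℕ)} := by
    ext j; simp only [Set.mem_setOf_eq, Fin.lt_def]
  have h2 : {j : Fin n | j ≤ i} = {j : Fin n | (j : ℕ) < (i : ℕ) + 1} := by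
    ext j; simp only [Set.mem_setOf_eq, Fin.le_def]; omega
  unfold lam rkF
  rw [h1, h2]

lemma tele_sum (F : ℕ → ℕ) (hmono : ∀ m, F m ≤ F (m + 1))
    (hstep : ∀ m, F (m + 1) ≤ F m + 1) :
    ∀ N t, t ≤ N →
      (∑ m ∈ Finset.range N, if m < t ∧ F m < F (m + 1) then 1 else 0) = F t - F 0 := by
  have hF : Monotone F := monotone_nat_of_le_succ hmono
  intro N
  induction N with
  | zero =>
    intro t ht
    have ht0 : t = 0 := by omega
    subst ht0
    simp
  | succ N ih =>
    intro t ht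
    rcases Nat.lt_or_ge t (N + 1) with h | h
    · rw [Finset.sum_range_succ, ih t (by omega)]
      have hno : ¬ (N < t ∧ F N < F (N + 1)) := by omega
      rw [if_neg hno]
      omega
    · have ht' : t = N + 1 := by omega
      subst ht'
      rw [Finset.sum_range_succ]
      have hc : (∑ m ∈ Finset.range N, if m < N + 1 ∧ F m < F (m + 1) then 1 else 0)
          = ∑ m ∈ Finset.range N, if m < N ∧ F m < F (m + 1) then 1 else 0 := by
        apply Finset.sum_congr rfl
        intro m hm
        have hmN := Finset.mem_range.mp hm
        have h1 : (m < N + 1 ∧ F m < F (m + 1)) ↔ (m < N ∧ F m < F (m + 1)) := by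
          constructor <;> rintro ⟨_, h2⟩ <;> exact ⟨by omega, h2⟩
        simp only [h1]
      rw [hc, ih N le_rfl]
      have h0N : F 0 ≤ F N := hF (Nat.zero_le N)
      have h1 := hmono N
      have h2 := hstep N
      by_cases hlt : F N < F (N + 1)
      · rw [if_pos ⟨Nat.lt_succ_self N, hlt⟩]; omega
      · rw [if_neg (by tauto)]; omega

lemma cnt_eq (hwr : (ones w).card = r) (hInd : ∀ I : Set (Fin n),
    M.Indep I ↔ ∀ i ≤ r, (I ∩ flagOfWord w i).ncard ≤ i)
    (σ : Equiv.Perm (Fin n)) (i : Fin n) :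
    ((ones (lam M σ)).filter (· ≤ i)).card = rkF M σ ((i : ℕ) + 1) := by
  classical
  have h1 : ((ones (lam M σ)).filter (· ≤ i)).card
      = ∑ j : Fin n, if ((j : ℕ) < (i : ℕ) + 1 ∧ rkF M σ (j : ℕ) < rkF M σ ((j : ℕ) + 1))
          then 1 else 0 := by
    rw [ones, Finset.filter_filter, Finset.card_filter]
    apply Finset.sum_congr rfl
    intro j _
    have hiff : (lam M σ j = true ∧ j ≤ i)
        ↔ ((j : ℕ) < (i : ℕ) + 1 ∧ rkF M σ (j : ℕ) < rkF M σ ((j : ℕ) + 1)) := by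
      rw [lam_eq_rkF, decide_eq_true_eq, Fin.le_def]
      omega
    simp only [hiff]
  rw [h1, Fin.sum_univ_eq_sum_range
    (fun m => if (m < (i : ℕ) + 1 ∧ rkF M σ m < rkF M σ (m + 1)) then 1 else 0) n,
    tele_sum (rkF M σ) (rkF_mono_step hwr hInd σ) (rkF_step_le hwr hInd σ) n
      ((i : ℕ) + 1) i.isLt,
    rkF_zero hwr hInd, Nat.sub_zero]

lemma ones_card_eq (hwr : (ones w).card = r) (hInd : ∀ I : Set (Fin n),
    M.Indep I ↔ ∀ i ≤ r, (I ∩ flagOfWord w i).ncard ≤ i)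
    (σ : Equiv.Perm (Fin n)) : (ones (lam M σ)).card = rkF M σ n := by
  classical
  have h1 : (ones (lam M σ)).card
      = ∑ j : Fin n, if ((j : ℕ) < n ∧ rkF M σ (j : ℕ) < rkF M σ ((j : ℕ) + 1))
          then 1 else 0 := by
    rw [ones, Finset.card_filter]
    apply Finset.sum_congr rfl
    intro j _
    have hiff : (lam M σ j = true)
        ↔ ((j : ℕ) < n ∧ rkF M σ (j : ℕ) < rkF M σ ((j : ℕ) + 1)) := by
      rw [lam_eq_rkF, decide_eq_true_eq]
      exact ⟨fun h => ⟨j.isLt, h⟩, fun h => h.2⟩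
    simp only [hiff]
  rw [h1, Fin.sum_univ_eq_sum_range
    (fun m => if (m < n ∧ rkF M σ m < rkF M σ (m + 1)) then 1 else 0) n,
    tele_sum (rkF M σ) (rkF_mono_step hwr hInd σ) (rkF_step_le hwr hInd σ) n n le_rfl,
    rkF_zero hwr hInd, Nat.sub_zero]

lemma rkF_top (σ : Equiv.Perm (Fin n)) : rkF M σ n = matRk M Set.univ := by
  have h : {j : Fin n | (j : ℕ) < n} = Set.univ := by
    ext j; simp [j.isLt]
  unfold rkF
  rw [h, Set.image_univ, Equiv.range_eq_univ]

lemma emb_le_iff (s : Finset (Fin n)) (k : ℕ) (hk : k < s.card) (i : Fin n) :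
    s.orderEmbOfFin rfl ⟨k, hk⟩ ≤ i ↔ k < (s.filter (· ≤ i)).card := by
  classical
  constructor
  · intro h
    have hsub : (Finset.Iic (⟨k, hk⟩ : Fin s.card)).image (s.orderEmbOfFin rfl)
        ⊆ s.filter (· ≤ i) := by
      intro x hx
      obtain ⟨m, hm, rfl⟩ := Finset.mem_image.mp hx
      refine Finset.mem_filter.mpr ⟨Finset.orderEmbOfFin_mem s rfl m, ?_⟩
      exact le_trans ((s.orderEmbOfFin rfl).le_iff_le.mpr (Finset.mem_Iic.mp hm)) h
    have hcard := Finset.card_le_card hsub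
    rw [Finset.card_image_of_injective _ (s.orderEmbOfFin rfl).injective,
      Fin.card_Iic] at hcard
    simp only [Fin.val_mk] at hcard
    omega
  · intro h
    by_contra hlt
    push_neg at hlt
    have hsub : s.filter (· ≤ i)
        ⊆ (Finset.Iio (⟨k, hk⟩ : Fin s.card)).image (s.orderEmbOfFin rfl) := by
      intro j hj
      obtain ⟨hjs, hji⟩ := Finset.mem_filter.mp hj
      have hr : j ∈ Set.range (s.orderEmbOfFin rfl) := by
        rw [Finset.range_orderEmbOfFin]; exact hjs
      obtain ⟨m, rfl⟩ := hr
      refine Finset.mem_image.mpr ⟨m, Finset.mem_Iio.mpr ?_, rfl⟩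
      exact (s.orderEmbOfFin rfl).lt_iff_lt.mp (lt_of_le_of_lt hji hlt)
    have hcard := Finset.card_le_card hsub
    have hc2 := Finset.card_image_le (s := Finset.Iio (⟨k, hk⟩ : Fin s.card))
      (f := ⇑(s.orderEmbOfFin rfl))
    rw [Fin.card_Iio] at hc2
    simp only [Fin.val_mk] at hc2
    omega

lemma wordLE_of_cnt (u v : Fin n → Bool) (hc : (ones u).card = (ones v).card)
    (h : ∀ i : Fin n, ((ones v).filter (· ≤ i)).card ≤ ((ones u).filter (· ≤ i)).card) :
    wordLE u v := by
  refine ⟨hc, ?_⟩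
  intro k hu hv
  have h1 : k < (((ones v)).filter (· ≤ (ones v).orderEmbOfFin rfl ⟨k, hv⟩)).card :=
    (emb_le_iff _ k hv _).mp le_rfl
  exact (emb_le_iff _ k hu _).mpr (lt_of_lt_of_le h1 (h _))

lemma wordLE_refl (v : Fin n → Bool) : wordLE v v :=
  ⟨rfl, fun _ _ _ => le_rfl⟩

lemma wordLE_trans {u v x : Fin n → Bool} (h1 : wordLE u v) (h2 : wordLE v x) :
    wordLE u x := by
  obtain ⟨hc1, he1⟩ := h1
  obtain ⟨hc2, he2⟩ := h2
  refine ⟨hc1.trans hc2, fun k hu hx => ?_⟩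
  have hv : k < (ones v).card := hc1 ▸ hu
  exact le_trans (he1 k hu hv) (he2 k hv hx)

lemma inversions_lt (σ : Equiv.Perm (Fin n)) (a b : Fin n) (hab : a < b)
    (h : σ a < σ b) : inversions σ < inversions (σ * Equiv.swap a b) := by
  classical
  set s := Equiv.swap a b with hs
  have hss : ∀ z, s (s z) = z := fun z => Equiv.swap_apply_self a b z
  have hτapp : ∀ z, (σ * s) z = σ (s z) := fun z => rfl
  set A := Finset.univ.filter (fun p : Fin n × Fin n => p.1 < p.2 ∧ σ p.2 < σ p.1) with hA
  set B := Finset.univ.filter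
    (fun p : Fin n × Fin n => p.1 < p.2 ∧ (σ * s) p.2 < (σ * s) p.1) with hB
  set f : Fin n × Fin n → Fin n × Fin n :=
    fun p => if s p.1 < s p.2 then (s p.1, s p.2) else p with hf
  have key : ∀ x y : Fin n, x < y → σ y < σ x → ¬ (s x < s y) → σ (s y) < σ (s x) := by
    intro x y hxy hσxy hns
    rcases eq_or_ne x a with rfl | hxa
    · rcases eq_or_ne y b with rfl | hyb
      · rw [hs, Equiv.swap_apply_left, Equiv.swap_apply_right]
        exact h
      · have hya : y ≠ x := hxy.ne'
        rw [hs, Equiv.swap_apply_left, Equiv.swap_apply_of_ne_of_ne hya hyb]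
        exact hσxy.trans h
    · rcases eq_or_ne x b with rfl | hxb
      · have hya : y ≠ a := (hab.trans hxy).ne'
        have hyb : y ≠ x := hxy.ne'
        exfalso; apply hns
        rw [hs, Equiv.swap_apply_right, Equiv.swap_apply_of_ne_of_ne hya hyb]
        exact hab.trans hxy
      · rcases eq_or_ne y a with rfl | hya
        · exfalso; apply hns
          rw [hs, Equiv.swap_apply_left, Equiv.swap_apply_of_ne_of_ne hxa hxb]
          exact hxy.trans hab
        · rcases eq_or_ne y b with rfl | hyb
          · rw [hs, Equiv.swap_apply_right, Equiv.swap_apply_of_ne_of_ne hxa hxb]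
            exact h.trans hσxy
          · exfalso; apply hns
            rw [hs, Equiv.swap_apply_of_ne_of_ne hxa hxb,
              Equiv.swap_apply_of_ne_of_ne hya hyb]
            exact hxy
  have hmemB : ∀ p ∈ A, f p ∈ B := by
    intro p hp
    obtain ⟨-, hx, hσp⟩ := Finset.mem_filter.mp hp
    by_cases hc : s p.1 < s p.2
    · rw [hf]
      simp only [if_pos hc]
      refine Finset.mem_filter.mpr ⟨Finset.mem_univ _, hc, ?_⟩
      show (σ * s) (s p.2) < (σ * s) (s p.1)
      rw [hτapp (s p.2), hτapp (s p.1), hss, hss]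
      exact hσp
    · rw [hf]
      simp only [if_neg hc]
      refine Finset.mem_filter.mpr ⟨Finset.mem_univ _, hx, ?_⟩
      show (σ * s) p.2 < (σ * s) p.1
      rw [hτapp p.2, hτapp p.1]
      exact key p.1 p.2 hx hσp hc
  have hne : ∀ p ∈ A, f p ≠ (a, b) := by
    intro p hp heq
    obtain ⟨-, hx, hσp⟩ := Finset.mem_filter.mp hp
    by_cases hc : s p.1 < s p.2
    · rw [hf] at heq
      simp only [if_pos hc, Prod.mk.injEq] at heq
      obtain ⟨h1, h2⟩ := heq
      have hp1 : p.1 = b := by rw [← hss p.1, h1, hs, Equiv.swap_apply_left]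
      have hp2 : p.2 = a := by rw [← hss p.2, h2, hs, Equiv.swap_apply_right]
      rw [hp1, hp2] at hx
      exact absurd (hx.trans hab) (lt_irrefl b)
    · rw [hf] at heq
      simp only [if_neg hc] at heq
      rw [heq] at hσp
      exact absurd (hσp.trans h) (lt_irrefl (σ b))
  have hinj : Set.InjOn f ↑A := by
    intro p hp q hq hfq
    have hpx : p.1 < p.2 := (Finset.mem_filter.mp hp).2.1
    have hqx : q.1 < q.2 := (Finset.mem_filter.mp hq).2.1
    rw [hf] at hfq
    by_cases hcp : s p.1 < s p.2 <;> by_cases hcq : s q.1 < s q.2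
    · simp only [if_pos hcp, if_pos hcq, Prod.mk.injEq] at hfq
      obtain ⟨h1, h2⟩ := hfq
      have e1 : p.1 = q.1 := by rw [← hss p.1, h1, hss]
      have e2 : p.2 = q.2 := by rw [← hss p.2, h2, hss]
      exact Prod.ext e1 e2
    · simp only [if_pos hcp, if_neg hcq] at hfq
      exfalso
      apply hcq
      rw [← hfq]
      simp only [hss]
      exact hpx
    · simp only [if_neg hcp, if_pos hcq] at hfq
      exfalso
      apply hcp
      rw [hfq]
      simp only [hss]
      exact hqx
    · simpa only [if_neg hcp, if_neg hcq] using hfq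
  have habB : (a, b) ∈ B := by
    refine Finset.mem_filter.mpr ⟨Finset.mem_univ _, hab, ?_⟩
    show (σ * s) b < (σ * s) a
    rw [hτapp b, hτapp a, hs, Equiv.swap_apply_left, Equiv.swap_apply_right]
    exact h
  have himg : A.image f ⊆ B.erase (a, b) := by
    intro x hx
    obtain ⟨p, hp, rfl⟩ := Finset.mem_image.mp hx
    exact Finset.mem_erase.mpr ⟨hne p hp, hmemB p hp⟩
  calc inversions σ = A.card := rfl
    _ = (A.image f).card := (Finset.card_image_of_injOn hinj).symm
    _ ≤ (B.erase (a, b)).card := Finset.card_le_card himg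
    _ < B.card := Finset.card_erase_lt_of_mem habB
    _ = inversions (σ * s) := rfl

lemma rkF_le_swap (hwr : (ones w).card = r) (hInd : ∀ I : Set (Fin n),
    M.Indep I ↔ ∀ i ≤ r, (I ∩ flagOfWord w i).ncard ≤ i)
    (σ : Equiv.Perm (Fin n)) (a b : Fin n) (hab : a < b) (hσ : σ a < σ b) (k : ℕ) :
    rkF M σ k ≤ rkF M (σ * Equiv.swap a b) k := by
  classical
  set s := Equiv.swap a b with hs
  set A : Set (Fin n) := {j : Fin n | (j : ℕ) < k} with hA
  have hss : ∀ z, s (s z) = z := fun z => Equiv.swap_apply_self a b z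
  have himg : ⇑(σ * s) '' A = ⇑σ '' (⇑s '' A) := by
    rw [← Set.image_comp]; rfl
  by_cases hmid : (a : ℕ) < k ∧ ¬ (b : ℕ) < k
  · have hbA : b ∉ A := hmid.2
    have hsA : ⇑s '' A = insert b (A \ {a}) := by
      ext z
      simp only [Set.mem_image, Set.mem_insert_iff, Set.mem_diff,
        Set.mem_singleton_iff]
      constructor
      · rintro ⟨x, hx, rfl⟩
        rcases eq_or_ne x a with rfl | hxa
        · left; rw [hs, Equiv.swap_apply_left]
        · rcases eq_or_ne x b with rfl | hxb
          · exact absurd hx hbA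
          · right
            rw [hs, Equiv.swap_apply_of_ne_of_ne hxa hxb]
            exact ⟨hx, hxa⟩
      · rintro (rfl | ⟨hz, hza⟩)
        · exact ⟨a, hmid.1, by rw [hs, Equiv.swap_apply_left]⟩
        · have hzb : z ≠ b := fun hzb => hbA (hzb ▸ hz)
          exact ⟨z, hz, by rw [hs, Equiv.swap_apply_of_ne_of_ne hza hzb]⟩
    have hσbA : σ b ∉ ⇑σ '' A := by
      rintro ⟨x, hx, hxe⟩
      exact hbA (σ.injective hxe ▸ hx)
    have hfinal : ⇑σ '' (⇑s '' A) = insert (σ b) ((⇑σ '' A) \ {σ a}) := by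
      rw [hsA, Set.image_insert_eq, Set.image_diff σ.injective, Set.image_singleton]
    unfold rkF
    rw [himg, hfinal]
    exact matRk_exchange hwr hInd hσ hσbA
  · have hiff : ((a : ℕ) < k ↔ (b : ℕ) < k) := by
      have hab' : (a : ℕ) < (b : ℕ) := hab
      push_neg at hmid
      constructor
      · intro h'; exact hmid h'
      · intro h'; omega
    have hz : ∀ z : Fin n, s z ∈ A ↔ z ∈ A := by
      intro z
      rcases eq_or_ne z a with rfl | hza
      · rw [hs, Equiv.swap_apply_left]
        simpa [hA] using hiff.symm
      · rcases eq_or_ne z b with rfl | hzb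
        · rw [hs, Equiv.swap_apply_right]
          simpa [hA] using hiff
        · rw [hs, Equiv.swap_apply_of_ne_of_ne hza hzb]
    have hsA : ⇑s '' A = A := by
      ext z
      constructor
      · rintro ⟨x, hx, rfl⟩
        exact (hz x).mpr hx
      · intro hzA
        exact ⟨s z, (hz (s z)).mp (by rw [hss z]; exact hzA), hss z⟩
    unfold rkF
    rw [himg, hsA]

lemma rkF_le_of_step (hwr : (ones w).card = r) (hInd : ∀ I : Set (Fin n),
    M.Indep I ↔ ∀ i ≤ r, (I ∩ flagOfWord w i).ncard ≤ i)
    {σ τ : Equiv.Perm (Fin n)}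
    (hstep : inversions σ < inversions τ ∧
      ∃ i j : Fin n, i ≠ j ∧ τ = σ * Equiv.swap i j) :
    ∀ k, rkF M σ k ≤ rkF M τ k := by
  obtain ⟨hlen, i, j, hij, rfl⟩ := hstep
  obtain ⟨a, b, hab, hswap⟩ : ∃ a b : Fin n, a < b ∧ Equiv.swap i j = Equiv.swap a b := by
    rcases lt_or_gt_of_ne hij with h' | h'
    · exact ⟨i, j, h', rfl⟩
    · exact ⟨j, i, h', Equiv.swap_comm i j⟩
  rw [hswap] at hlen ⊢
  by_cases hσ : σ a < σ b
  · exact fun k => rkF_le_swap hwr hInd σ a b hab hσ k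
  · exfalso
    have hne2 : σ a ≠ σ b := fun h' => hab.ne (σ.injective h')
    have hσ' : σ b < σ a := lt_of_le_of_ne (not_lt.mp hσ) hne2.symm
    have h1 : (σ * Equiv.swap a b) a < (σ * Equiv.swap a b) b := by
      rw [Equiv.Perm.mul_apply, Equiv.Perm.mul_apply, Equiv.swap_apply_left,
        Equiv.swap_apply_right]
      exact hσ'
    have h2 := inversions_lt (σ * Equiv.swap a b) a b hab h1
    rw [mul_assoc, Equiv.swap_mul_self, mul_one] at h2
    omega

end AuxProof

/-- If `M = M_w` is the freedom matroid of a word `w ∈ W(n,r)`, then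
`λ_M : S_n → W(n,r)` is order-reversing with respect to the strong Bruhat order:
`σ ≤ τ` in the Bruhat order implies `λ_M(σ) ≥ λ_M(τ)` in `W(n,r)`. -/
theorem lam_bruhat_order_reversing {n r : ℕ} (w : Fin n → Bool)
    (hwr : (ones w).card = r)
    (M : Matroid (Fin n)) (hE : M.E = Set.univ)
    (hInd : ∀ I : Set (Fin n),
      M.Indep I ↔ ∀ i ≤ r, (I ∩ flagOfWord w i).ncard ≤ i)
    (σ τ : Equiv.Perm (Fin n)) (hστ : bruhatLE σ τ) :
    wordLE (lam M τ) (lam M σ) := by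
  classical
  induction hστ with
  | refl => exact wordLE_refl _
  | @tail b c _ hbc ih =>
    refine wordLE_trans ?_ ih
    have hk := rkF_le_of_step hwr hInd hbc
    refine wordLE_of_cnt _ _ ?_ ?_
    · rw [ones_card_eq hwr hInd c, ones_card_eq hwr hInd b, rkF_top, rkF_top]
    · intro i
      rw [cnt_eq hwr hInd c i, cnt_eq hwr hInd b i]
      exact hk _
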